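/- Let (W,S) be a universal Coxeter system and H its Hecke algebra over ℤ[v,v⁻¹]. Define, for each reduced expression x = s₁…s_d, the element b_x recursively by the Dyer formula: b_∅ = 1, b_s = H_s + v, b_{xg} = b_x·b_g when g differs from the last two letters of x, and b_{xr} = b_x·b_r − b_{xb} when x ends in rb (r ≠ b). Then for any reduced expression x ending in the letter b, one has b_x·b_b = (v + v⁻¹)·b_x. -/
import Mathlib


open LaurentPolynomial

variable {S : Type*} [DecidableEq S]
variable {A : Type*} [Ring A] [Algebra (LaurentPolynomial ℤ) A]

/-- `v ∈ ℤ[v,v⁻¹]`. -/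
noncomputable def vv : LaurentPolynomial ℤ := T 1

/-- `v⁻¹ ∈ ℤ[v,v⁻¹]`. -/
noncomputable def vvinv : LaurentPolynomial ℤ := T (-1)

/-- The Kazhdan–Lusztig generator `b_s = H_s + v`. -/
noncomputable def klgen (H : S → A) (s : S) : A :=
  H s + algebraMap (LaurentPolynomial ℤ) A vv

/-- The Kazhdan–Lusztig basis element `b_x` attached to a reduced expression `x`,
defined by Dyer's recursion.  Here the expression is recorded as the *reversed* list
of its letters, so that `klb H (g :: l)` is `b_{xg}` where `l` is the reversal of `x`:
`b_∅ = 1`, `b_s = H_s + v`, `b_{xg} = b_x·b_g` when `x` ends in `rb` and `g ∉ {r, b}`,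
and `b_{xr} = b_x·b_r − b_{xb}` when `x` ends in `rb` with `r ≠ b`. -/
noncomputable def klb (H : S → A) : List S → A
  | [] => 1
  | [s] => klgen H s
  | [s, t] => klb H [t] * klgen H s
  | (g :: b :: r :: rest) =>
      if g = r then klb H (b :: r :: rest) * klgen H g - klb H (r :: rest)
      else klb H (b :: r :: rest) * klgen H g


lemma klgen_sq (H : S → A)
    (quad : ∀ s : S,
      (H s + algebraMap (LaurentPolynomial ℤ) A vv) *
        (H s - algebraMap (LaurentPolynomial ℤ) A vvinv) = 0) (s : S) :
    klgen H s * klgen H s = algebraMap (LaurentPolynomial ℤ) A (vv + vvinv) * klgen H s := by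
  have h := quad s
  rw [Algebra.commutes]
  unfold klgen
  rw [map_add]
  calc (H s + algebraMap (LaurentPolynomial ℤ) A vv) * (H s + algebraMap (LaurentPolynomial ℤ) A vv)
      = (H s + algebraMap (LaurentPolynomial ℤ) A vv) *
          (H s - algebraMap (LaurentPolynomial ℤ) A vvinv)
        + (H s + algebraMap (LaurentPolynomial ℤ) A vv) *
            (algebraMap (LaurentPolynomial ℤ) A vv + algebraMap (LaurentPolynomial ℤ) A vvinv) := by
        noncomm_ring
    _ = _ := by rw [h, zero_add]

/-- For any reduced expression `x` ending in the letter `b`,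
`b_x · b_b = (v + v⁻¹) · b_x`.  (The list `b :: l` is the reversal of `x`.) -/
theorem klb_mul_last (H : S → A)
    (quad : ∀ s : S,
      (H s + algebraMap (LaurentPolynomial ℤ) A vv) *
        (H s - algebraMap (LaurentPolynomial ℤ) A vvinv) = 0)
    (b : S) (l : List S) (hred : (b :: l).Chain' (· ≠ ·)) :
    klb H (b :: l) * klgen H b =
      algebraMap (LaurentPolynomial ℤ) A (vv + vvinv) * klb H (b :: l) :=
  match l, hred with
  | [], _ => by
      simpa only [klb] using klgen_sq H quad b
  | [r], _ => by
      show klgen H r * klgen H b * klgen H b = _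
      rw [mul_assoc, klgen_sq H quad b, ← mul_assoc, ← Algebra.commutes, mul_assoc]
      rfl
  | r :: r2 :: rest, hred => by
      by_cases hb : b = r2
      · subst hb
        have ih := klb_mul_last H quad b rest hred.tail.tail
        rw [show klb H (b :: r :: b :: rest)
            = klb H (r :: b :: rest) * klgen H b - klb H (b :: rest) from by simp [klb]]
        rw [sub_mul, mul_assoc, klgen_sq H quad b, ih, mul_sub, ← mul_assoc,
          ← Algebra.commutes, mul_assoc]
      · rw [show klb H (b :: r :: r2 :: rest)
            = klb H (r :: r2 :: rest) * klgen H b from by simp [klb, hb]]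
        rw [mul_assoc, klgen_sq H quad b, ← mul_assoc, ← Algebra.commutes, mul_assoc]
termination_by l.length
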